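/- Let G ∈ ℝ^{p×p} be symmetric positive semidefinite and g ∈ range(G). Suppose g = Φ^T g' and G = Φ^T G' Φ for an invertible matrix Φ ∈ ℝ^{p×p}, with g' ∈ range(G'). Then g^T G^† g = g'^T G'^† g'. -/
import Mathlib


open Matrix

/-- `B` satisfies the four Penrose conditions for being the Moore–Penrose
pseudoinverse of `A`. -/
def IsMoorePenroseInv {p : ℕ} (A B : Matrix (Fin p) (Fin p) ℝ) : Prop :=
  A * B * A = A ∧ B * A * B = B ∧ (A * B)ᵀ = A * B ∧ (B * A)ᵀ = B * A

lemma mulVec_dot {p : ℕ} (A : Matrix (Fin p) (Fin p) ℝ) (u v : Fin p → ℝ) :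
    (A *ᵥ u) ⬝ᵥ v = u ⬝ᵥ (Aᵀ *ᵥ v) := by
  rw [dotProduct_mulVec, vecMul_transpose]

lemma quad_eq {p : ℕ} (G B : Matrix (Fin p) (Fin p) ℝ)
    (hsym : Gᵀ = G) (hpen : G * B * G = G) (w : Fin p → ℝ) :
    (G *ᵥ w) ⬝ᵥ (B *ᵥ (G *ᵥ w)) = w ⬝ᵥ (G *ᵥ w) := by
  rw [mulVec_mulVec, mulVec_dot, mulVec_mulVec, hsym, ← Matrix.mul_assoc, hpen]

/-- Invariance of the pseudoinverse quadratic form `gᵀ G† g` under congruence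
`G = Φᵀ G' Φ`, `g = Φᵀ g'` by an invertible `Φ`, when `g ∈ range G` and
`g' ∈ range G'`. -/
theorem pseudoinverse_quadform_congruence_invariant (p : ℕ)
    (G G' : Matrix (Fin p) (Fin p) ℝ)
    (hG : G.PosSemidef) (hG' : G'.PosSemidef)
    (g g' : Fin p → ℝ)
    (hg : ∃ w, g = G *ᵥ w) (hg' : ∃ w', g' = G' *ᵥ w')
    (Φ : Matrix (Fin p) (Fin p) ℝ) (hΦ : IsUnit Φ.det)
    (hcong : G = Φᵀ * G' * Φ) (hgcong : g = Φᵀ *ᵥ g') :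
    ∀ Gdag Gdag' : Matrix (Fin p) (Fin p) ℝ,
      IsMoorePenroseInv G Gdag → IsMoorePenroseInv G' Gdag' →
        g ⬝ᵥ (Gdag *ᵥ g) = g' ⬝ᵥ (Gdag' *ᵥ g') := by
  intro Gdag Gdag' hP hP'
  obtain ⟨w, hw⟩ := hg
  obtain ⟨w', hw'⟩ := hg'
  have hGsym : Gᵀ = G := hG.1.eq
  have hG'sym : G'ᵀ = G' := hG'.1.eq
  -- LHS = w ⬝ᵥ g
  have h1 : g ⬝ᵥ (Gdag *ᵥ g) = w ⬝ᵥ g := by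
    rw [hw]; exact quad_eq G Gdag hGsym hP.1 w
  have h2 : g' ⬝ᵥ (Gdag' *ᵥ g') = w' ⬝ᵥ g' := by
    rw [hw']; exact quad_eq G' Gdag' hG'sym hP'.1 w'
  rw [h1, h2]
  -- key: G' *ᵥ (Φ *ᵥ w) = G' *ᵥ w'
  have hΦT : IsUnit Φᵀ.det := by rwa [det_transpose]
  have key : G' *ᵥ (Φ *ᵥ w) = G' *ᵥ w' := by
    have h3 : Φᵀ *ᵥ (G' *ᵥ (Φ *ᵥ w)) = Φᵀ *ᵥ (G' *ᵥ w') := by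
      rw [mulVec_mulVec, mulVec_mulVec, mulVec_mulVec, ← hcong, ← hw, hgcong, hw',
        mulVec_mulVec]
    exact mulVec_injective_iff_isUnit.2 ((Matrix.isUnit_iff_isUnit_det _).2 hΦT) h3
  calc w ⬝ᵥ g = (Φ *ᵥ w) ⬝ᵥ g' := by
        rw [hgcong]; exact (mulVec_dot Φ w g').symm
    _ = (Φ *ᵥ w) ⬝ᵥ (G' *ᵥ w') := by rw [hw']
    _ = (G' *ᵥ (Φ *ᵥ w)) ⬝ᵥ w' := by
        rw [mulVec_dot G' (Φ *ᵥ w) w', hG'sym]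
    _ = (G' *ᵥ w') ⬝ᵥ w' := by rw [key]
    _ = w' ⬝ᵥ g' := by rw [hw', dotProduct_comm]
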